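/- Let F be a field of characteristic not 2 and let M = [[a,b,c],[x,y,z],[u,v,w]] be the generic 3×3 matrix over R. Then every monomial of the form e₁·e₂·e₃ where e₁, e₂, e₃ are entries of M lying in three distinct rows and three distinct columns satisfies (e₁e₂e₃)² ∈ P_2(M); in particular the radical of P_2(M) contains all such monomials. -/
import Mathlib


open MvPolynomial

lemma mem_perm_span (F : Type*) [Field F] (i k j l : Fin 3) (hik : i < k) (hjl : j ≠ l) :
    (X (i, j) * X (k, l) + X (k, j) * X (i, l) : MvPolynomial (Fin 3 × Fin 3) F) ∈
      Ideal.span {f : MvPolynomial (Fin 3 × Fin 3) F |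
        ∃ i k j l : Fin 3, i < k ∧ j < l ∧
          f = X (i, j) * X (k, l) + X (k, j) * X (i, l)} := by
  apply Ideal.subset_span
  rcases hjl.lt_or_gt with h | h
  · exact ⟨i, k, j, l, hik, h, rfl⟩
  · exact ⟨i, k, l, j, hik, h, by ring⟩

/-- `M` is the generic 3×3 matrix with entries `X (i,j)`.  For every
permutation `σ` of `{0,1,2}`, the product `∏ i, X (i, σ i)` of entries from
three distinct rows and three distinct columns has its square in `P₂(M)`, the
ideal of 2×2 subpermanents; in particular this product lies in the radical
of `P₂(M)`. -/
theorem antidiagonal_products_sq_mem (F : Type*) [Field F] (h2 : (2 : F) ≠ 0)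
    (σ : Equiv.Perm (Fin 3)) :
    (∏ i : Fin 3, X (i, σ i) : MvPolynomial (Fin 3 × Fin 3) F) ^ 2 ∈
      Ideal.span {f : MvPolynomial (Fin 3 × Fin 3) F |
        ∃ i k j l : Fin 3, i < k ∧ j < l ∧
          f = X (i, j) * X (k, l) + X (k, j) * X (i, l)} ∧
    (∏ i : Fin 3, X (i, σ i) : MvPolynomial (Fin 3 × Fin 3) F) ∈
      (Ideal.span {f : MvPolynomial (Fin 3 × Fin 3) F |
        ∃ i k j l : Fin 3, i < k ∧ j < l ∧
          f = X (i, j) * X (k, l) + X (k, j) * X (i, l)}).radical := by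
  set I := Ideal.span {f : MvPolynomial (Fin 3 × Fin 3) F |
        ∃ i k j l : Fin 3, i < k ∧ j < l ∧
          f = X (i, j) * X (k, l) + X (k, j) * X (i, l)} with hI
  set x : Fin 3 → Fin 3 → MvPolynomial (Fin 3 × Fin 3) F := fun i j => X (i, σ j) with hx
  have h01 : σ 0 ≠ σ 1 := σ.injective.ne (by decide)
  have h02 : σ 0 ≠ σ 2 := σ.injective.ne (by decide)
  have h12 : σ 1 ≠ σ 2 := σ.injective.ne (by decide)
  have G : ∀ i k j l : Fin 3, i < k → σ j ≠ σ l →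
      (x i j * x k l + x k j * x i l) ∈ I := fun i k j l hik hjl =>
    mem_perm_span F i k (σ j) (σ l) hik hjl
  have key : (x 0 0 * x 1 1 * x 2 2) ^ 2 =
      C ((2 : F)⁻¹) *
        (x 0 0 * x 1 1 * x 2 2 ^ 2 * (x 0 0 * x 1 1 + x 1 0 * x 0 1)
        - x 0 0 * x 1 0 * x 1 1 * x 2 2 * (x 0 1 * x 2 2 + x 2 1 * x 0 2)
        + x 0 0 * x 0 2 * x 1 1 * x 2 1 * (x 1 0 * x 2 2 + x 2 0 * x 1 2)
        - x 0 0 * x 1 1 * x 1 2 * x 2 1 * (x 0 0 * x 2 2 + x 2 0 * x 0 2)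
        + x 0 0 ^ 2 * x 1 1 * x 2 2 * (x 1 1 * x 2 2 + x 2 1 * x 1 2)) := by
    have hsum : (x 0 0 * x 1 1 * x 2 2 ^ 2 * (x 0 0 * x 1 1 + x 1 0 * x 0 1)
        - x 0 0 * x 1 0 * x 1 1 * x 2 2 * (x 0 1 * x 2 2 + x 2 1 * x 0 2)
        + x 0 0 * x 0 2 * x 1 1 * x 2 1 * (x 1 0 * x 2 2 + x 2 0 * x 1 2)
        - x 0 0 * x 1 1 * x 1 2 * x 2 1 * (x 0 0 * x 2 2 + x 2 0 * x 0 2)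
        + x 0 0 ^ 2 * x 1 1 * x 2 2 * (x 1 1 * x 2 2 + x 2 1 * x 1 2)) =
        C (2 : F) * (x 0 0 * x 1 1 * x 2 2) ^ 2 := by
      rw [show (C (2 : F) : MvPolynomial (Fin 3 × Fin 3) F) = 2 from map_ofNat C 2]; ring
    rw [hsum, ← mul_assoc, ← C_mul, inv_mul_cancel₀ h2, C_1, one_mul]
  have hmem : (x 0 0 * x 1 1 * x 2 2) ^ 2 ∈ I := by
    rw [key]
    refine Ideal.mul_mem_left _ _ ?_
    refine Ideal.add_mem _ (Ideal.sub_mem _ (Ideal.add_mem _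
      (Ideal.sub_mem _ ?_ ?_) ?_) ?_) ?_
    · exact Ideal.mul_mem_left _ _ (G 0 1 0 1 (by decide) h01)
    · exact Ideal.mul_mem_left _ _ (G 0 2 1 2 (by decide) h12)
    · exact Ideal.mul_mem_left _ _ (G 1 2 0 2 (by decide) h02)
    · exact Ideal.mul_mem_left _ _ (G 0 2 0 2 (by decide) h02)
    · exact Ideal.mul_mem_left _ _ (G 1 2 1 2 (by decide) h12)
  have hprod : (∏ i : Fin 3, X (i, σ i) : MvPolynomial (Fin 3 × Fin 3) F) =
      x 0 0 * x 1 1 * x 2 2 := by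
    rw [Fin.prod_univ_three]
  rw [hprod]
  exact ⟨hmem, ⟨2, hmem⟩⟩
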